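/- Let (X,d) be a metric space and μ a Borel measure on X that is finite on every bounded Borel set and positive on every nonempty open set, and let s > 0. If the conjugate function a_s is essentially bounded, then for every f ∈ L^1(μ) one has ‖A_s f‖_{L^1(μ)} ≤ ‖a_s‖_{L^∞(μ)} · ‖f‖_{L^1(μ)}. -/

import Mathlib

open MeasureTheory Metric ENNReal

/-- The averaging operator `A_s f(x) = (1/μ(B^cl(x,s))) ∫_{B^cl(x,s)} f dμ`
over closed balls. -/
noncomputable def avgOp {X : Type*} [MetricSpace X] [MeasurableSpace X]
    (μ : Measure X) (r : ℝ) (f : X → ℝ) (x : X) : ℝ :=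
  (μ (closedBall x r)).toReal⁻¹ * ∫ y in closedBall x r, f y ∂μ

/-- The conjugate function `a_s(y) = ∫_X 1_{B^cl(y,s)}(x) / μ(B^cl(x,s)) dμ(x)`. -/
noncomputable def conjFn {X : Type*} [MetricSpace X] [MeasurableSpace X]
    (μ : Measure X) (s : ℝ) (y : X) : ℝ≥0∞ :=
  ∫⁻ x in closedBall y s, (μ (closedBall x s))⁻¹ ∂μ

/-- Under the positivity and σ-finiteness hypotheses, the space is second countable:
maximal `ε`-separated sets give disjoint families of positive-measure balls, hence are
countable `ε`-nets. -/
lemma secondCountable_of_measure {X : Type*} [MetricSpace X] [MeasurableSpace X] [BorelSpace X]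
    (μ : Measure X) [SFinite μ]
    (hpos : ∀ U : Set X, IsOpen U → U.Nonempty → 0 < μ U) :
    SecondCountableTopology X := by
  refine Metric.secondCountable_of_almost_dense_set fun ε hε => ?_
  set S : Set (Set X) := {T | T.Pairwise fun a b => ε ≤ dist a b} with hSdef
  obtain ⟨T, hT⟩ := zorn_subset S (fun c hcS hchain => by
    refine ⟨⋃₀ c, fun a ha b hb hab => ?_, fun t ht => Set.subset_sUnion_of_mem ht⟩
    obtain ⟨ta, hta, hata⟩ := ha
    obtain ⟨tb, htb, hbtb⟩ := hb
    rcases hchain.total hta htb with h | h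
    · exact hcS htb (h hata) hbtb hab
    · exact hcS hta hata (h hbtb) hab)
  have hTsep : T.Pairwise fun a b => ε ≤ dist a b := hT.prop
  -- T is countable
  have hTcount : T.Countable := by
    have hdisj : Pairwise (Function.onFun Disjoint fun y : T => ball (y : X) (ε / 2)) := by
      intro y z hyz
      refine Set.disjoint_left.2 fun w hwy hwz => ?_
      have hd : ε ≤ dist (y : X) z :=
        hTsep y.2 z.2 (fun h => hyz (Subtype.ext h))
      have : dist (y : X) z < ε := by
        calc dist (y : X) z ≤ dist (w : X) y + dist w z :=
          dist_triangle_left _ _ _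
        _ < ε / 2 + ε / 2 := add_lt_add hwy hwz
        _ = ε := by ring
      exact absurd hd (not_le.2 this)
    have := MeasureTheory.Measure.countable_meas_pos_of_disjoint_iUnion
      (μ := μ) (As := fun y : T => ball (y : X) (ε / 2))
      (fun _ => measurableSet_ball) hdisj
    have huniv : {y : T | 0 < μ (ball (y : X) (ε / 2))} = Set.univ := by
      ext y
      simp only [Set.mem_setOf_eq, Set.mem_univ, iff_true]
      exact hpos _ isOpen_ball ⟨y, mem_ball_self (by positivity)⟩
    rw [huniv] at this
    rw [← Set.countable_coe_iff]
    exact Set.countable_univ_iff.mp this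
  refine ⟨T, hTcount, fun x => ?_⟩
  by_cases hx : x ∈ T
  · exact ⟨x, hx, by simp [hε.le]⟩
  · by_contra hcon
    push_neg at hcon
    have hins : insert x T ∈ S := by
      refine Set.pairwise_insert.2
        ⟨hTsep, fun y hy _ => ⟨(hcon y hy).le, by rw [dist_comm]; exact (hcon y hy).le⟩⟩
    have := hT.eq_of_subset hins (Set.subset_insert x T)
    exact hx (this ▸ Set.mem_insert x T)

/-- If the conjugate function `a_s` is essentially bounded, then
`‖A_s f‖_{L¹(μ)} ≤ ‖a_s‖_{L^∞(μ)} ⬝ ‖f‖_{L¹(μ)}` for every `f ∈ L¹(μ)`. -/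
theorem stmt1 {X : Type*} [MetricSpace X] [MeasurableSpace X] [BorelSpace X]
    (μ : Measure X)
    (hfin : ∀ s : Set X, Bornology.IsBounded s → μ s < ⊤)
    (hpos : ∀ U : Set X, IsOpen U → U.Nonempty → 0 < μ U)
    (s : ℝ) (hs : 0 < s)
    (hbound : essSup (conjFn μ s) μ < ⊤) :
    ∀ f : X → ℝ, Integrable f μ →
      eLpNorm (avgOp μ s f) 1 μ ≤ essSup (conjFn μ s) μ * eLpNorm f 1 μ := by
  intro f hf
  rcases isEmpty_or_nonempty X with hX | hne
  · have hμ0 : μ = 0 := by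
      ext t _
      rw [Set.eq_empty_of_isEmpty t]
      simp
    simp [hμ0]
  obtain ⟨x0⟩ := hne
  -- μ is σ-finite since X is a countable union of balls of finite measure
  haveI : SigmaFinite μ :=
    ⟨⟨⟨fun n => closedBall x0 n, fun _ => trivial,
      fun n => hfin _ isBounded_closedBall, iUnion_closedBall_nat x0⟩⟩⟩
  -- basic facts about balls
  have hBpos : ∀ x : X, 0 < μ (closedBall x s) := fun x =>
    lt_of_lt_of_le (hpos (ball x s) isOpen_ball ⟨x, mem_ball_self hs⟩)
      (measure_mono ball_subset_closedBall)
  have hBfin : ∀ x : X, μ (closedBall x s) < ⊤ := fun x =>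
    hfin _ isBounded_closedBall
  -- replace f with a strongly measurable representative g
  obtain ⟨g, hgm, hfg⟩ : ∃ g, StronglyMeasurable g ∧ f =ᵐ[μ] g :=
    ⟨hf.1.mk f, hf.1.stronglyMeasurable_mk, hf.1.ae_eq_mk⟩
  have hg : Integrable g μ := hf.congr hfg
  have havg : avgOp μ s f = avgOp μ s g := by
    funext x
    unfold avgOp
    rw [integral_congr_ae (ae_restrict_of_ae hfg)]
  rw [havg, eLpNorm_congr_ae hfg]
  clear havg hfg hf f
  set C := essSup (conjFn μ s) μ with hC
  set N : X → ℝ≥0∞ := fun y => (‖g y‖₊ : ℝ≥0∞) with hN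
  have hNmeas : Measurable N := hgm.measurable.nnnorm.coe_nnreal_ennreal
  set K : X → ℝ≥0∞ := fun x => (μ (closedBall x s))⁻¹ with hK
  -- measurability of K
  haveI : SecondCountableTopology X := secondCountable_of_measure μ hpos
  have hS : MeasurableSet {q : X × X | dist q.1 q.2 ≤ s} :=
    (isClosed_le continuous_dist continuous_const).measurableSet
  have hKmeas : Measurable K := by
    have h1 : Measurable fun x => μ (Prod.mk x ⁻¹' {q : X × X | dist q.1 q.2 ≤ s}) :=
      measurable_measure_prodMk_left hS
    have h2 : (fun x => μ (Prod.mk x ⁻¹' {q : X × X | dist q.1 q.2 ≤ s}))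
        = fun x => μ (closedBall x s) := by
      funext x
      congr 1
      ext y
      simp [mem_closedBall, dist_comm]
    rw [h2] at h1
    exact h1.inv
  -- the product kernel
  set F : X → X → ℝ≥0∞ :=
    fun x y => ({q : X × X | dist q.1 q.2 ≤ s}.indicator (fun q => K q.1 * N q.2)) (x, y)
      with hF
  have hFmeas : AEMeasurable (Function.uncurry F) (μ.prod μ) := by
    have : Function.uncurry F =
        {q : X × X | dist q.1 q.2 ≤ s}.indicator (fun q => K q.1 * N q.2) := rfl
    rw [this]
    exact (Measurable.indicator ((hKmeas.comp measurable_fst).mul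
      (hNmeas.comp measurable_snd)) hS).aemeasurable
  calc eLpNorm (avgOp μ s g) 1 μ
      = ∫⁻ x, ‖avgOp μ s g x‖₊ ∂μ := eLpNorm_one_eq_lintegral_enorm
    _ ≤ ∫⁻ x, K x * ∫⁻ y in closedBall x s, N y ∂μ ∂μ := by
        refine lintegral_mono fun x => ?_
        unfold avgOp
        calc (‖(μ (closedBall x s)).toReal⁻¹ * ∫ y in closedBall x s, g y ∂μ‖₊ : ℝ≥0∞)
            = (‖(μ (closedBall x s)).toReal⁻¹‖₊ : ℝ≥0∞) *
                ‖∫ y in closedBall x s, g y ∂μ‖₊ := by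
              rw [nnnorm_mul]; push_cast; ring
          _ ≤ K x * ∫⁻ y in closedBall x s, N y ∂μ := by
              refine mul_le_mul' (le_of_eq ?_) (enorm_integral_le_lintegral_enorm _)
              rw [← enorm_eq_nnnorm, Real.enorm_eq_ofReal (by positivity),
                ENNReal.ofReal_inv_of_pos (ENNReal.toReal_pos (hBpos x).ne' (hBfin x).ne),
                ENNReal.ofReal_toReal (hBfin x).ne]
    _ = ∫⁻ x, ∫⁻ y, F x y ∂μ ∂μ := by
        refine lintegral_congr fun x => ?_
        rw [← lintegral_const_mul' (K x) N (by
          simp only [hK, ne_eq, ENNReal.inv_eq_top]; exact (hBpos x).ne')]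
        rw [← lintegral_indicator measurableSet_closedBall]
        refine lintegral_congr fun y => ?_
        simp only [hF, Set.indicator, mem_closedBall, Set.mem_setOf_eq, dist_comm y x]
    _ = ∫⁻ y, ∫⁻ x, F x y ∂μ ∂μ := lintegral_lintegral_swap hFmeas
    _ = ∫⁻ y, N y * conjFn μ s y ∂μ := by
        refine lintegral_congr fun y => ?_
        have : ∀ x, F x y = (closedBall y s).indicator (fun x => N y * K x) x := by
          intro x
          simp only [hF, Set.indicator, mem_closedBall, Set.mem_setOf_eq, dist_comm x y,
            mul_comm (K x) (N y)]
        simp_rw [this]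
        rw [lintegral_indicator measurableSet_closedBall,
          lintegral_const_mul' (N y) K ENNReal.coe_ne_top]
        rfl
    _ ≤ ∫⁻ y, N y * C ∂μ := by
        refine lintegral_mono_ae ?_
        filter_upwards [_root_.ae_le_essSup (f := conjFn μ s)] with y hy
        exact mul_le_mul_right hy _
    _ = C * eLpNorm g 1 μ := by
        rw [eLpNorm_one_eq_lintegral_enorm]
        simp_rw [mul_comm]
        exact lintegral_const_mul' C N hbound.ne
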